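/- Let p be a prime and let G₁ and G₂ be finite abelian p-groups of the same order. Then G₁ and G₂ are isomorphic if and only if ψ(G₁) = ψ(G₂). -/

import Mathlib

/-- `psi G` is the sum of the orders of all elements of the finite group `G`. -/
noncomputable def psi (G : Type*) [Monoid G] [Fintype G] : ℕ := ∑ a : G, orderOf a

section Aux

open Finset

lemma geom_aux (p v : ℕ) (hp : 2 ≤ p) :
    (p - 1) * ∑ k ∈ Finset.range v, p ^ k + 1 = p ^ v := by
  induction v with
  | zero => simp
  | succ v ih =>
    rw [Finset.sum_range_succ, mul_add, pow_succ]
    have h2 : p ^ v + (p - 1) * p ^ v = p ^ v * p := by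
      have hpp : 1 + (p - 1) = p := by omega
      calc p ^ v + (p - 1) * p ^ v = (1 + (p - 1)) * p ^ v := by ring
        _ = p ^ v * p := by rw [hpp]; ring
    calc (p - 1) * ∑ k ∈ Finset.range v, p ^ k + (p - 1) * p ^ v + 1
        = ((p - 1) * ∑ k ∈ Finset.range v, p ^ k + 1) + (p - 1) * p ^ v := by ring
      _ = p ^ v + (p - 1) * p ^ v := by rw [ih]
      _ = p ^ v * p := h2

lemma sum_ite_aux (p K v : ℕ) (hp : 2 ≤ p) (hvK : v ≤ K) :
    p ^ v + (p - 1) * ∑ k ∈ Finset.range K, (if v ≤ k then p ^ k else 0)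
      = 1 + (p - 1) * ∑ k ∈ Finset.range K, p ^ k := by
  classical
  have h1 : ∑ k ∈ Finset.range K, (if v ≤ k then p ^ k else 0)
      = ∑ k ∈ Finset.Ico v K, p ^ k := by
    rw [← Finset.sum_filter]
    apply Finset.sum_congr _ (fun _ _ => rfl)
    ext k
    simp only [Finset.mem_filter, Finset.mem_Ico, Finset.mem_range]
    omega
  have h2 : ∑ k ∈ Finset.range v, p ^ k + ∑ k ∈ Finset.Ico v K, p ^ k
      = ∑ k ∈ Finset.range K, p ^ k := by
    rw [Finset.range_eq_Ico, Finset.range_eq_Ico]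
    exact Finset.sum_Ico_consecutive (fun k => p ^ k) (Nat.zero_le v) hvK
  have h3 := geom_aux p v hp
  rw [h1, ← h2, mul_add]
  linarith

lemma psi_formula {G : Type*} [CommGroup G] [Fintype G] [DecidableEq G] (p K : ℕ) (hp : 2 ≤ p)
    (horder : ∀ a : G, ∃ v, v ≤ K ∧ orderOf a = p ^ v) :
    psi G + (p - 1) * ∑ k ∈ Finset.range K,
        p ^ k * (Finset.univ.filter (fun a : G => a ^ p ^ k = 1)).card
      = Fintype.card G * (1 + (p - 1) * ∑ k ∈ Finset.range K, p ^ k) := by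
  have key : ∀ a : G, orderOf a
      + (p - 1) * ∑ k ∈ Finset.range K, (if a ^ p ^ k = 1 then p ^ k else 0)
      = 1 + (p - 1) * ∑ k ∈ Finset.range K, p ^ k := by
    intro a
    obtain ⟨v, hvK, hv⟩ := horder a
    have hcond : ∀ k : ℕ, (a ^ p ^ k = 1) ↔ (v ≤ k) := by
      intro k
      rw [← orderOf_dvd_iff_pow_eq_one, hv,
        Nat.pow_dvd_pow_iff_le_right (by omega : 1 < p)]
    simp only [hcond, hv]
    exact sum_ite_aux p K v hp hvK
  have h4 : ∀ k ∈ Finset.range K,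
      p ^ k * (Finset.univ.filter (fun a : G => a ^ p ^ k = 1)).card
        = ∑ a : G, (if a ^ p ^ k = 1 then p ^ k else 0) := by
    intro k _
    rw [← Finset.sum_filter, Finset.sum_const, smul_eq_mul]
    exact Nat.mul_comm _ _
  calc psi G + (p - 1) * ∑ k ∈ Finset.range K,
        p ^ k * (Finset.univ.filter (fun a : G => a ^ p ^ k = 1)).card
      = ∑ a : G, orderOf a + (p - 1) * ∑ k ∈ Finset.range K, ∑ a : G,
          (if a ^ p ^ k = 1 then p ^ k else 0) := by
        rw [psi, Finset.sum_congr rfl h4]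
    _ = ∑ a : G, orderOf a + ∑ a : G, (p - 1) * ∑ k ∈ Finset.range K,
          (if a ^ p ^ k = 1 then p ^ k else 0) := by
        rw [Finset.sum_comm, Finset.mul_sum]
    _ = ∑ a : G, (orderOf a + (p - 1) * ∑ k ∈ Finset.range K,
          (if a ^ p ^ k = 1 then p ^ k else 0)) := by
        rw [Finset.sum_add_distrib]
    _ = ∑ _a : G, (1 + (p - 1) * ∑ k ∈ Finset.range K, p ^ k) :=
        Finset.sum_congr rfl (fun a _ => key a)
    _ = Fintype.card G * (1 + (p - 1) * ∑ k ∈ Finset.range K, p ^ k) := by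
        rw [Finset.sum_const, Finset.card_univ, smul_eq_mul]

lemma key_lt (p : ℕ) (hp : 2 ≤ p) (K j0 : ℕ) (hj0 : j0 < K) (C₁ C₂ : ℕ → ℕ)
    (hm : ∀ k, k ≤ j0 → C₁ k ≤ C₁ j0)
    (hpow₁ : ∃ i, C₁ j0 = p ^ i) (hpow₂ : ∃ i, C₂ j0 = p ^ i)
    (hlt : C₁ j0 < C₂ j0) (habove : ∀ k, j0 < k → k < K → C₁ k = C₂ k) :
    ∑ k ∈ Finset.range K, p ^ k * C₁ k < ∑ k ∈ Finset.range K, p ^ k * C₂ k := by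
  have hsplit : ∀ C : ℕ → ℕ, ∑ k ∈ Finset.range K, p ^ k * C k
      = (∑ k ∈ Finset.range j0, p ^ k * C k + p ^ j0 * C j0)
        + ∑ k ∈ Finset.Ico (j0 + 1) K, p ^ k * C k := by
    intro C
    rw [Finset.range_eq_Ico, ← Finset.sum_Ico_consecutive _ (Nat.zero_le (j0 + 1)) hj0,
      ← Finset.range_eq_Ico, Finset.sum_range_succ]
  rw [hsplit C₁, hsplit C₂]
  have htail : ∑ k ∈ Finset.Ico (j0 + 1) K, p ^ k * C₁ k
      = ∑ k ∈ Finset.Ico (j0 + 1) K, p ^ k * C₂ k := by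
    apply Finset.sum_congr rfl
    intro k hk
    rw [Finset.mem_Ico] at hk
    rw [habove k (by omega) hk.2]
  rw [htail]
  apply Nat.add_lt_add_right
  obtain ⟨a, ha⟩ := hpow₁
  obtain ⟨b, hb⟩ := hpow₂
  have h2 : p * C₁ j0 ≤ C₂ j0 := by
    have hab : a < b := by
      rw [ha, hb] at hlt
      exact (Nat.pow_lt_pow_iff_right (by omega : 1 < p)).mp hlt
    rw [ha, hb, ← pow_succ']
    exact Nat.pow_le_pow_right (by omega) hab
  have hx1 : 1 ≤ C₁ j0 := by rw [ha]; exact Nat.one_le_pow _ _ (by omega)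
  have hS : ∑ k ∈ Finset.range j0, p ^ k < p ^ j0 := by
    have hg := geom_aux p j0 hp
    have hle : ∑ k ∈ Finset.range j0, p ^ k ≤ (p - 1) * ∑ k ∈ Finset.range j0, p ^ k :=
      Nat.le_mul_of_pos_left _ (by omega)
    linarith
  have hA1 : ∑ k ∈ Finset.range j0, p ^ k * C₁ k
      ≤ (∑ k ∈ Finset.range j0, p ^ k) * C₁ j0 := by
    rw [Finset.sum_mul]
    apply Finset.sum_le_sum
    intro k hk
    exact Nat.mul_le_mul_left _ (hm k (le_of_lt (Finset.mem_range.mp hk)))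
  calc ∑ k ∈ Finset.range j0, p ^ k * C₁ k + p ^ j0 * C₁ j0
      ≤ (∑ k ∈ Finset.range j0, p ^ k) * C₁ j0 + p ^ j0 * C₁ j0 :=
        Nat.add_le_add_right hA1 _
    _ < p ^ j0 * C₁ j0 + p ^ j0 * C₁ j0 := by
        apply Nat.add_lt_add_right
        exact Nat.mul_lt_mul_of_pos_right hS (by omega)
    _ = 2 * (p ^ j0 * C₁ j0) := by ring
    _ ≤ p * (p ^ j0 * C₁ j0) := Nat.mul_le_mul_right _ hp
    _ = p ^ j0 * (p * C₁ j0) := by ring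
    _ ≤ p ^ j0 * C₂ j0 := Nat.mul_le_mul_left _ h2
    _ ≤ ∑ k ∈ Finset.range j0, p ^ k * C₂ k + p ^ j0 * C₂ j0 := Nat.le_add_left _ _

lemma C_eq_of_sum_eq (p : ℕ) (hp : 2 ≤ p) (K : ℕ) (C₁ C₂ : ℕ → ℕ)
    (hm₁ : Monotone C₁) (hm₂ : Monotone C₂)
    (hpow₁ : ∀ k, ∃ i, C₁ k = p ^ i) (hpow₂ : ∀ k, ∃ i, C₂ k = p ^ i)
    (hsum : ∑ k ∈ Finset.range K, p ^ k * C₁ k = ∑ k ∈ Finset.range K, p ^ k * C₂ k) :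
    ∀ k, k < K → C₁ k = C₂ k := by
  classical
  by_contra h
  push_neg at h
  obtain ⟨k₀, hk₀K, hk₀⟩ := h
  set S : Finset ℕ := (Finset.range K).filter (fun k => C₁ k ≠ C₂ k) with hS
  have hne : S.Nonempty := ⟨k₀, by simp [hS, Finset.mem_filter, Finset.mem_range, hk₀K, hk₀]⟩
  set j0 := S.max' hne with hj0def
  have hj0mem : j0 ∈ S := S.max'_mem hne
  have hj0K : j0 < K := Finset.mem_range.mp (Finset.mem_filter.mp hj0mem).1
  have hj0ne : C₁ j0 ≠ C₂ j0 := (Finset.mem_filter.mp hj0mem).2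
  have habove : ∀ k, j0 < k → k < K → C₁ k = C₂ k := by
    intro k h1 h2
    by_contra hne'
    have : k ∈ S := Finset.mem_filter.mpr ⟨Finset.mem_range.mpr h2, hne'⟩
    exact absurd (S.le_max' k this) (by omega)
  rcases Nat.lt_or_ge (C₁ j0) (C₂ j0) with hlt | hge
  · exact absurd hsum (Nat.ne_of_lt (key_lt p hp K j0 hj0K C₁ C₂
      (fun k hk => hm₁ hk) (hpow₁ j0) (hpow₂ j0) hlt habove))
  · have hlt : C₂ j0 < C₁ j0 := by omega
    exact absurd hsum.symm (Nat.ne_of_lt (key_lt p hp K j0 hj0K C₂ C₁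
      (fun k hk => hm₂ hk) (hpow₂ j0) (hpow₁ j0) hlt (fun k h1 h2 => (habove k h1 h2).symm)))

lemma map_min_succ (s : Multiset ℕ) (k : ℕ) :
    (s.map (fun x => min x (k + 1))).sum
      = (s.map (fun x => min x k)).sum + (s.filter (fun x => k < x)).card := by
  classical
  induction s using Multiset.induction_on with
  | empty => simp
  | cons a s ih =>
    rw [Multiset.map_cons, Multiset.sum_cons, Multiset.map_cons, Multiset.sum_cons,
      Multiset.filter_cons, Multiset.card_add, ih]
    by_cases h : k < a
    · simp only [h, if_pos]
      simp only [Multiset.card_singleton]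
      omega
    · simp only [h, if_neg, not_false_iff]
      simp only [Multiset.card_zero]
      omega

lemma count_filter_aux (s : Multiset ℕ) (k : ℕ) :
    (s.filter (fun x => k < x)).card
      = (s.filter (fun x => k + 1 < x)).card + s.count (k + 1) := by
  classical
  induction s using Multiset.induction_on with
  | empty => simp
  | cons a s ih =>
    rw [Multiset.filter_cons, Multiset.filter_cons, Multiset.count_cons,
      Multiset.card_add, Multiset.card_add, ih]
    by_cases h1 : k < a <;> by_cases h2 : k + 1 < a <;> by_cases h3 : k + 1 = a <;>
      simp [h1, h2, h3] <;> omega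

lemma multiset_eq_of_min (s t : Multiset ℕ) (hs : 0 ∉ s) (ht : 0 ∉ t)
    (h : ∀ k, (s.map (fun x => min x k)).sum = (t.map (fun x => min x k)).sum) : s = t := by
  classical
  have hf : ∀ k, (s.filter (fun x => k < x)).card = (t.filter (fun x => k < x)).card := by
    intro k
    have h1 := map_min_succ s k
    have h2 := map_min_succ t k
    have h3 := h k
    have h4 := h (k + 1)
    omega
  ext v
  cases v with
  | zero => rw [Multiset.count_eq_zero.mpr hs, Multiset.count_eq_zero.mpr ht]
  | succ w =>
    have h1 := count_filter_aux s w
    have h2 := count_filter_aux t w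
    have h3 := hf w
    have h4 := hf (w + 1)
    omega

lemma count_map_univ {ι : Type*} [Fintype ι] (e : ι → ℕ) (v : ℕ) :
    (Finset.univ.val.map e).count v
      = (Finset.univ.filter (fun i => e i = v)).card := by
  classical
  rw [Multiset.count_map]
  show ((Finset.univ.val).filter (fun a => v = e a)).card = _
  rw [Finset.card_def, Finset.filter_val]
  congr 1
  apply Multiset.filter_congr
  intro x _
  exact eq_comm

/-- `Equiv.piCongrLeft'` as a `MulEquiv`. -/
def mulPiCongrLeft' {ι ι' : Type*} (M : ι → Type*) [∀ i, Mul (M i)] (e : ι ≃ ι') :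
    ((i : ι) → M i) ≃* ((i : ι') → M (e.symm i)) where
  toEquiv := Equiv.piCongrLeft' M e
  map_mul' _ _ := rfl

/-- `Equiv.piCongrLeft` as a `MulEquiv`. -/
def mulPiCongrLeft {ι ι' : Type*} (M : ι' → Type*) [∀ i, Mul (M i)] (e : ι ≃ ι') :
    ((i : ι) → M (e i)) ≃* ((i : ι') → M i) :=
  (mulPiCongrLeft' M e.symm).symm

/-- Cast between `Multiplicative (ZMod (p ^ a))` for equal exponents. -/
def mulEquivZMod (p : ℕ) {a b : ℕ} (h : a = b) :
    Multiplicative (ZMod (p ^ a)) ≃* Multiplicative (ZMod (p ^ b)) := by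
  subst h; exact MulEquiv.refl _

lemma zmod_torsion (p : ℕ) (hp : p.Prime) (v k : ℕ) :
    Nat.card {y : Multiplicative (ZMod (p ^ v)) // y ^ p ^ k = 1} = p ^ min v k := by
  haveI : NeZero (p ^ v) := ⟨pow_ne_zero v hp.ne_zero⟩
  set t := min v k with ht
  have htv : t ≤ v := min_le_left _ _
  have htk : t ≤ k := min_le_right _ _
  set g : Multiplicative (ZMod (p ^ v)) :=
    Multiplicative.ofAdd ((p ^ (v - t) : ℕ) : ZMod (p ^ v)) with hg
  have horder : orderOf g = p ^ t := by
    rw [hg, orderOf_ofAdd_eq_addOrderOf,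
      ZMod.addOrderOf_coe _ (pow_ne_zero v hp.ne_zero),
      Nat.gcd_eq_right (pow_dvd_pow p (Nat.sub_le v t)),
      Nat.pow_div (Nat.sub_le v t) hp.pos]
    congr 1
    omega
  have hlow : p ^ t ≤ Nat.card {y : Multiplicative (ZMod (p ^ v)) // y ^ p ^ k = 1} := by
    rw [← horder, ← Nat.card_zpowers]
    have hmem : ∀ x : (Subgroup.zpowers g),
        (x.1 : Multiplicative (ZMod (p ^ v))) ^ p ^ k = 1 := by
      intro x
      have hd : orderOf (x.1 : Multiplicative (ZMod (p ^ v))) ∣ p ^ t :=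
        horder ▸ orderOf_dvd_of_mem_zpowers x.2
      exact orderOf_dvd_iff_pow_eq_one.mp (hd.trans (pow_dvd_pow p htk))
    have hinj : Function.Injective
        (fun x : (Subgroup.zpowers g) =>
          (⟨x.1, hmem x⟩ : {y : Multiplicative (ZMod (p ^ v)) // y ^ p ^ k = 1})) := by
      intro x y hxy
      have h1 := congrArg Subtype.val hxy
      exact Subtype.ext h1
    exact Nat.card_le_card_of_injective _ hinj
  have hupper : Nat.card {y : Multiplicative (ZMod (p ^ v)) // y ^ p ^ k = 1} ≤ p ^ t := by
    rcases le_total v k with h | h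
    · have : t = v := by omega
      rw [this]
      calc Nat.card {y : Multiplicative (ZMod (p ^ v)) // y ^ p ^ k = 1}
          ≤ Nat.card (Multiplicative (ZMod (p ^ v))) := Finite.card_subtype_le _
        _ = p ^ v := by
            rw [Nat.card_congr (Multiplicative.toAdd (α := ZMod (p ^ v))), Nat.card_zmod]
    · have hteq : t = k := by omega
      rw [hteq]
      have hle := IsCyclic.card_pow_eq_one_le
        (α := Multiplicative (ZMod (p ^ v))) (n := p ^ k) (pow_pos hp.pos k)
      calc Nat.card {y : Multiplicative (ZMod (p ^ v)) // y ^ p ^ k = 1}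
          = (Finset.univ.filter
              (fun a : Multiplicative (ZMod (p ^ v)) => a ^ p ^ k = 1)).card := by
            rw [Nat.card_eq_fintype_card, Fintype.card_subtype]
        _ ≤ p ^ k := by exact_mod_cast hle
  omega

end Aux

theorem abelian_p_groups_iso_iff_psi_eq (p : ℕ) (hp : p.Prime)
    (G₁ G₂ : Type*) [CommGroup G₁] [CommGroup G₂] [Fintype G₁] [Fintype G₂]
    (hp₁ : IsPGroup p G₁) (hp₂ : IsPGroup p G₂)
    (hcard : Fintype.card G₁ = Fintype.card G₂) :
    Nonempty (G₁ ≃* G₂) ↔ psi G₁ = psi G₂ := by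
  classical
  haveI : Fact p.Prime := ⟨hp⟩
  have hp2 : 2 ≤ p := hp.two_le
  constructor
  · rintro ⟨f⟩
    unfold psi
    exact Fintype.sum_equiv f.toEquiv _ _
      (fun a => (orderOf_injective f.toMonoidHom f.injective a).symm)
  · intro hpsi
    -- classification of both groups
    obtain ⟨ι₁, hι₁, n₁, hn₁, ⟨iso₁⟩⟩ := CommGroup.equiv_prod_multiplicative_zmod_of_finite G₁
    obtain ⟨ι₂, hι₂, n₂, hn₂, ⟨iso₂⟩⟩ := CommGroup.equiv_prod_multiplicative_zmod_of_finite G₂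
    haveI := hι₁
    haveI := hι₂
    -- each n i is a power of p
    obtain ⟨m₀, hm₀⟩ := (IsPGroup.iff_card (p := p) (G := G₁)).mp hp₁
    obtain ⟨m₀', hm₀'⟩ := (IsPGroup.iff_card (p := p) (G := G₂)).mp hp₂
    have hcard₁ : Nat.card G₁ = ∏ i, n₁ i := by
      rw [Nat.card_congr iso₁.toEquiv, Nat.card_pi]
      exact Finset.prod_congr rfl (fun i _ => by
        rw [Nat.card_congr (Multiplicative.toAdd (α := ZMod (n₁ i))), Nat.card_zmod])
    have hcard₂ : Nat.card G₂ = ∏ i, n₂ i := by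
      rw [Nat.card_congr iso₂.toEquiv, Nat.card_pi]
      exact Finset.prod_congr rfl (fun i _ => by
        rw [Nat.card_congr (Multiplicative.toAdd (α := ZMod (n₂ i))), Nat.card_zmod])
    have hdvd₁ : ∀ i, n₁ i ∣ p ^ m₀ := by
      intro i
      rw [← hm₀, hcard₁]
      exact Finset.dvd_prod_of_mem _ (Finset.mem_univ i)
    have hdvd₂ : ∀ i, n₂ i ∣ p ^ m₀' := by
      intro i
      rw [← hm₀', hcard₂]
      exact Finset.dvd_prod_of_mem _ (Finset.mem_univ i)
    choose e₁ he₁le he₁ using fun i => (Nat.dvd_prime_pow hp).mp (hdvd₁ i)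
    choose e₂ he₂le he₂ using fun i => (Nat.dvd_prime_pow hp).mp (hdvd₂ i)
    have hfun₁ : n₁ = fun i => p ^ e₁ i := funext he₁
    have hfun₂ : n₂ = fun i => p ^ e₂ i := funext he₂
    subst hfun₁
    subst hfun₂
    have he₁pos : ∀ i, 1 ≤ e₁ i := by
      intro i
      rcases Nat.eq_zero_or_pos (e₁ i) with h | h
      · have h2 : 1 < p ^ e₁ i := hn₁ i
        rw [h, pow_zero] at h2
        omega
      · omega
    have he₂pos : ∀ i, 1 ≤ e₂ i := by
      intro i
      rcases Nat.eq_zero_or_pos (e₂ i) with h | h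
      · have h2 : 1 < p ^ e₂ i := hn₂ i
        rw [h, pow_zero] at h2
        omega
      · omega
    set m₁ := ∑ i, e₁ i with hm₁def
    set m₂ := ∑ i, e₂ i with hm₂def
    have hcardG₁ : Fintype.card G₁ = p ^ m₁ := by
      rw [← Nat.card_eq_fintype_card, hcard₁, Finset.prod_pow_eq_pow_sum]
    have hcardG₂ : Fintype.card G₂ = p ^ m₂ := by
      rw [← Nat.card_eq_fintype_card, hcard₂, Finset.prod_pow_eq_pow_sum]
    have hm₁₂ : m₁ = m₂ := by
      apply Nat.pow_right_injective hp2
      show p ^ m₁ = p ^ m₂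
      rw [← hcardG₁, ← hcardG₂, hcard]
    set K := m₁ + 1 with hKdef
    -- torsion counts
    have hC₁ : ∀ k : ℕ, (Finset.univ.filter (fun a : G₁ => a ^ p ^ k = 1)).card
        = p ^ (∑ i, min (e₁ i) k) := by
      intro k
      have e1 : {x : G₁ // x ^ p ^ k = 1}
          ≃ {y : (i : ι₁) → Multiplicative (ZMod (p ^ e₁ i)) // y ^ p ^ k = 1} :=
        Equiv.subtypeEquiv iso₁.toEquiv (fun a => by
          constructor
          · intro h
            show iso₁ a ^ p ^ k = 1
            rw [← map_pow, h, map_one]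
          · intro h
            apply iso₁.injective
            rw [map_pow, map_one]
            exact h)
      have e2 : {y : (i : ι₁) → Multiplicative (ZMod (p ^ e₁ i)) // y ^ p ^ k = 1}
          ≃ ((i : ι₁) → {z : Multiplicative (ZMod (p ^ e₁ i)) // z ^ p ^ k = 1}) :=
        (Equiv.subtypeEquivRight (fun y => by
          simp only [funext_iff, Pi.pow_apply, Pi.one_apply])).trans
          (Equiv.subtypePiEquivPi)
      rw [← Fintype.card_subtype, ← Nat.card_eq_fintype_card,
        Nat.card_congr (e1.trans e2), Nat.card_pi]
      rw [Finset.prod_congr rfl (fun i _ => zmod_torsion p hp (e₁ i) k),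
        Finset.prod_pow_eq_pow_sum]
    have hC₂ : ∀ k : ℕ, (Finset.univ.filter (fun a : G₂ => a ^ p ^ k = 1)).card
        = p ^ (∑ i, min (e₂ i) k) := by
      intro k
      have e1 : {x : G₂ // x ^ p ^ k = 1}
          ≃ {y : (i : ι₂) → Multiplicative (ZMod (p ^ e₂ i)) // y ^ p ^ k = 1} :=
        Equiv.subtypeEquiv iso₂.toEquiv (fun a => by
          constructor
          · intro h
            show iso₂ a ^ p ^ k = 1
            rw [← map_pow, h, map_one]
          · intro h
            apply iso₂.injective
            rw [map_pow, map_one]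
            exact h)
      have e2 : {y : (i : ι₂) → Multiplicative (ZMod (p ^ e₂ i)) // y ^ p ^ k = 1}
          ≃ ((i : ι₂) → {z : Multiplicative (ZMod (p ^ e₂ i)) // z ^ p ^ k = 1}) :=
        (Equiv.subtypeEquivRight (fun y => by
          simp only [funext_iff, Pi.pow_apply, Pi.one_apply])).trans
          (Equiv.subtypePiEquivPi)
      rw [← Fintype.card_subtype, ← Nat.card_eq_fintype_card,
        Nat.card_congr (e1.trans e2), Nat.card_pi]
      rw [Finset.prod_congr rfl (fun i _ => zmod_torsion p hp (e₂ i) k),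
        Finset.prod_pow_eq_pow_sum]
    -- orders of elements
    have horder₁ : ∀ a : G₁, ∃ v, v ≤ K ∧ orderOf a = p ^ v := by
      intro a
      obtain ⟨j, hj⟩ := hp₁ a
      obtain ⟨v, _, hv⟩ := (Nat.dvd_prime_pow hp).mp (orderOf_dvd_of_pow_eq_one hj)
      refine ⟨v, ?_, hv⟩
      have : p ^ v ∣ p ^ m₁ := by
        rw [← hv, ← hcardG₁]
        exact orderOf_dvd_card
      have := (Nat.pow_dvd_pow_iff_le_right (by omega : 1 < p)).mp this
      omega
    have horder₂ : ∀ a : G₂, ∃ v, v ≤ K ∧ orderOf a = p ^ v := by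
      intro a
      obtain ⟨j, hj⟩ := hp₂ a
      obtain ⟨v, _, hv⟩ := (Nat.dvd_prime_pow hp).mp (orderOf_dvd_of_pow_eq_one hj)
      refine ⟨v, ?_, hv⟩
      have : p ^ v ∣ p ^ m₂ := by
        rw [← hv, ← hcardG₂]
        exact orderOf_dvd_card
      have := (Nat.pow_dvd_pow_iff_le_right (by omega : 1 < p)).mp this
      omega
    -- psi formulas
    have F₁ := psi_formula (G := G₁) p K hp2 horder₁
    have F₂ := psi_formula (G := G₂) p K hp2 horder₂
    rw [hpsi, hcard] at F₁
    have hXeq : ∑ k ∈ Finset.range K,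
        p ^ k * (Finset.univ.filter (fun a : G₁ => a ^ p ^ k = 1)).card
        = ∑ k ∈ Finset.range K,
        p ^ k * (Finset.univ.filter (fun a : G₂ => a ^ p ^ k = 1)).card := by
      have := F₁.trans F₂.symm
      have hcancel := Nat.add_left_cancel this
      exact Nat.eq_of_mul_eq_mul_left (by omega) hcancel
    -- convert to C-functions
    have hXeq' : ∑ k ∈ Finset.range K, p ^ k * p ^ (∑ i, min (e₁ i) k)
        = ∑ k ∈ Finset.range K, p ^ k * p ^ (∑ i, min (e₂ i) k) := by
      calc ∑ k ∈ Finset.range K, p ^ k * p ^ (∑ i, min (e₁ i) k)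
          = ∑ k ∈ Finset.range K,
              p ^ k * (Finset.univ.filter (fun a : G₁ => a ^ p ^ k = 1)).card :=
            Finset.sum_congr rfl (fun k _ => congrArg (fun z => p ^ k * z) (hC₁ k).symm)
        _ = ∑ k ∈ Finset.range K,
              p ^ k * (Finset.univ.filter (fun a : G₂ => a ^ p ^ k = 1)).card := hXeq
        _ = ∑ k ∈ Finset.range K, p ^ k * p ^ (∑ i, min (e₂ i) k) :=
            Finset.sum_congr rfl (fun k _ => congrArg (fun z => p ^ k * z) (hC₂ k))
    have hmono₁ : Monotone (fun k => p ^ (∑ i, min (e₁ i) k)) := by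
      intro k l hkl
      apply Nat.pow_le_pow_right (by omega)
      exact Finset.sum_le_sum (fun i _ => min_le_min (le_refl _) hkl)
    have hmono₂ : Monotone (fun k => p ^ (∑ i, min (e₂ i) k)) := by
      intro k l hkl
      apply Nat.pow_le_pow_right (by omega)
      exact Finset.sum_le_sum (fun i _ => min_le_min (le_refl _) hkl)
    have hCeq : ∀ k, k < K → p ^ (∑ i, min (e₁ i) k) = p ^ (∑ i, min (e₂ i) k) :=
      C_eq_of_sum_eq p hp2 K _ _ hmono₁ hmono₂
        (fun k => ⟨_, rfl⟩) (fun k => ⟨_, rfl⟩) hXeq'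
    -- min-sums agree for all k
    have hminsum : ∀ k, ∑ i, min (e₁ i) k = ∑ i, min (e₂ i) k := by
      intro k
      rcases Nat.lt_or_ge k K with h | h
      · exact Nat.pow_right_injective hp2 (hCeq k h)
      · have h₁ : ∀ i, min (e₁ i) k = e₁ i := by
          intro i
          have : e₁ i ≤ m₁ := Finset.single_le_sum (fun j _ => Nat.zero_le (e₁ j))
            (Finset.mem_univ i)
          omega
        have h₂ : ∀ i, min (e₂ i) k = e₂ i := by
          intro i
          have : e₂ i ≤ m₂ := Finset.single_le_sum (fun j _ => Nat.zero_le (e₂ j))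
            (Finset.mem_univ i)
          omega
        rw [Finset.sum_congr rfl (fun i _ => h₁ i), Finset.sum_congr rfl (fun i _ => h₂ i)]
        exact hm₁₂
    -- multiset equality
    set s : Multiset ℕ := Finset.univ.val.map e₁ with hsdef
    set t : Multiset ℕ := Finset.univ.val.map e₂ with htdef
    have hms : s = t := by
      apply multiset_eq_of_min
      · intro h
        rw [hsdef, Multiset.mem_map] at h
        obtain ⟨i, _, hi⟩ := h
        have := he₁pos i
        omega
      · intro h
        rw [htdef, Multiset.mem_map] at h
        obtain ⟨i, _, hi⟩ := h
        have := he₂pos i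
        omega
      · intro k
        rw [hsdef, htdef, Multiset.map_map, Multiset.map_map]
        exact hminsum k
    -- build the bijection
    have hfib : ∀ v : ℕ, Fintype.card {i : ι₁ // e₁ i = v}
        = Fintype.card {j : ι₂ // e₂ j = v} := by
      intro v
      rw [Fintype.card_subtype, Fintype.card_subtype, ← count_map_univ e₁ v,
        ← count_map_univ e₂ v, ← hsdef, ← htdef, hms]
    let σ : ι₁ ≃ ι₂ := Equiv.ofFiberEquiv (f := e₁) (g := e₂)
      (fun v => Fintype.equivOfCardEq (hfib v))
    have hσ : ∀ i, e₂ (σ i) = e₁ i := fun i => Equiv.ofFiberEquiv_map _ i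
    refine ⟨iso₁.trans (MulEquiv.trans ?_ iso₂.symm)⟩
    exact (MulEquiv.piCongrRight (fun i => mulEquivZMod p (hσ i).symm)).trans
      (mulPiCongrLeft (fun j => Multiplicative (ZMod (p ^ e₂ j))) σ)
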